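/- Let G₀ be an H-free graph, where H is a connected bipartite graph on h ≥ 3 vertices, and let G be obtained from G₀ by replacing each vertex with a clique of size t (a 'blob'), putting all t² edges between two blobs if the corresponding vertices of G₀ are adjacent and no edges otherwise. Then G contains no induced copy of H. -/

import Mathlib

open SimpleGraph

/-- The blowup of `G₀` where every vertex is replaced by a clique ("blob") of size `t`,
with complete joins between blobs corresponding to edges of `G₀`. -/
def blowup {W : Type*} (G₀ : SimpleGraph W) (t : ℕ) : SimpleGraph (W × Fin t) where
  Adj x y := (x.1 = y.1 ∧ x.2 ≠ y.2) ∨ G₀.Adj x.1 y.1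
  symm := by
    constructor
    rintro x y (⟨h1, h2⟩ | h)
    · exact Or.inl ⟨h1.symm, h2.symm⟩
    · exact Or.inr h.symm
  loopless := by
    constructor
    rintro x (⟨h1, h2⟩ | h)
    · exact h2 rfl
    · exact G₀.irrefl h

/-- Along a walk from outside a set `S` into `S`, there is an edge crossing into `S`. -/
lemma cross_edge {V : Type*} {G : SimpleGraph V} (S : Set V) :
    ∀ {a b : V}, G.Walk a b → a ∉ S → b ∈ S →
      ∃ x y, x ∉ S ∧ y ∈ S ∧ G.Adj x y := by
  intro a b p
  induction p with
  | nil => intro ha hb; exact absurd hb ha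
  | @cons a' b' c' hadj q ih =>
    intro ha hb
    by_cases hc : b' ∈ S
    · exact ⟨_, _, ha, hc, hadj⟩
    · exact ih hc hb

theorem stmt_6 {W : Type*} (G₀ : SimpleGraph W) (t h : ℕ) (hh : 3 ≤ h)
    (H : SimpleGraph (Fin h)) (hconn : H.Connected) (hbip : H.Colorable 2)
    (hfree : ∀ f : H →g G₀, ¬ Function.Injective f) :
    IsEmpty (H ↪g blowup G₀ t) := by
  constructor
  intro φ
  obtain ⟨c⟩ := hbip
  have fin2 : ∀ a b d : Fin 2, a ≠ d → b ≠ d → a = b := by decide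
  -- key: adjacent vertices of H cannot share a blob
  have key : ∀ u v : Fin h, H.Adj u v → (φ u).1 ≠ (φ v).1 := by
    -- first an asymmetric helper
    have helper : ∀ a b x : Fin h, H.Adj a b → (φ a).1 = (φ b).1 →
        x ≠ b → H.Adj x a → ¬ H.Adj x b → False := by
      intro a b x hab heq hxb hxa hnxb
      have hadj : (blowup G₀ t).Adj (φ x) (φ a) := φ.map_adj_iff.2 hxa
      have hne : φ x ≠ φ b := fun he => hxb (φ.injective he)
      rcases hadj with ⟨h1, _⟩ | h1
      · -- x in same blob as a (= blob of b), so x adjacent to b in blowup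
        have : (blowup G₀ t).Adj (φ x) (φ b) := by
          refine Or.inl ⟨h1.trans heq, ?_⟩
          intro h2
          exact hne (Prod.ext (h1.trans heq) h2)
        exact hnxb (φ.map_adj_iff.1 this)
      · have : (blowup G₀ t).Adj (φ x) (φ b) := Or.inr (heq ▸ h1)
        exact hnxb (φ.map_adj_iff.1 this)
    intro u v huv heq
    -- find a vertex outside {u, v}
    have hcard : 0 < (({u, v} : Finset (Fin h))ᶜ).card := by
      rw [Finset.card_compl]
      have : ({u, v} : Finset (Fin h)).card ≤ 2 := Finset.card_insert_le _ _ |>.trans (by simp)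
      simp only [Fintype.card_fin]
      omega
    obtain ⟨w, hw⟩ := Finset.card_pos.1 hcard
    simp only [Finset.mem_compl, Finset.mem_insert, Finset.mem_singleton] at hw
    push_neg at hw
    have hwu : w ≠ u := hw.1
    have hwv : w ≠ v := hw.2
    -- a crossing edge into {u, v}
    obtain ⟨x, y, hx, hy, hxy⟩ :=
      cross_edge ({u, v} : Set (Fin h)) ((hconn w u).some) (by simp [hwu, hwv]) (by simp)
    simp only [Set.mem_insert_iff, Set.mem_singleton_iff] at hx hy
    push_neg at hx
    have hcuv : c u ≠ c v := c.valid huv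
    rcases hy with rfl | rfl
    · -- x ~ u ; then c x = c v so x ≁ v
      have hnxv : ¬ H.Adj x v := by
        intro hv
        exact c.valid hv (fin2 (c x) (c v) (c y) (c.valid hxy) (Ne.symm hcuv) ▸ rfl)
      exact helper y v x huv heq hx.2 hxy hnxv
    · have hnxu : ¬ H.Adj x u := by
        intro hu
        exact c.valid hu (fin2 (c x) (c u) (c y) (c.valid hxy) hcuv ▸ rfl)
      exact helper y u x huv.symm heq.symm hx.1 hxy hnxu
  -- build an injective hom into G₀
  let f : H →g G₀ := ⟨fun u => (φ u).1, by
    intro u v huv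
    rcases φ.map_adj_iff.2 huv with ⟨h1, _⟩ | h1
    · exact absurd h1 (key u v huv)
    · exact h1⟩
  apply hfree f
  intro u v heq
  by_contra hne
  by_cases hadj : H.Adj u v
  · exact key u v hadj heq
  · have hpne : φ u ≠ φ v := fun he => hne (φ.injective he)
    have : (blowup G₀ t).Adj (φ u) (φ v) := by
      refine Or.inl ⟨heq, fun h2 => hpne (Prod.ext heq h2)⟩
    exact hadj (φ.map_adj_iff.1 this)
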